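/- Let v : ℝⁿ → ℝᵐ be an affine 1-Lipschitz map, and define Φ : ℝᵐ × ℝⁿ × ℝⁿ → ℝ by Φ(x, y, y') = ‖x‖² + 2⟨x, v(y) − v(y')⟩ − ‖y − y'‖² + ‖v(y) − v(y')‖². Then Φ is a K-function. -/

import Mathlib

open scoped RealInnerProductSpace

section Aux

variable {E : Type*} [NormedAddCommGroup E] [InnerProductSpace ℝ E]

/-- Variance identity: decomposition around the barycenter. -/
lemma aux_V2 {l : ℕ} (a : Fin l → E) (lam : Fin l → ℝ) (h1 : ∑ i, lam i = 1) (c : E) :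
    ∑ i, lam i * ‖a i - c‖ ^ 2 =
      ∑ i, lam i * ‖a i - (∑ j, lam j • a j)‖ ^ 2 + ‖(∑ j, lam j • a j) - c‖ ^ 2 := by
  set A : E := ∑ j, lam j • a j with hA
  have hzero : (∑ i, lam i • (a i - A)) = 0 := by
    simp only [smul_sub, Finset.sum_sub_distrib, ← Finset.sum_smul, h1, one_smul]
    simp [hA]
  have key : ∀ i, ‖a i - c‖ ^ 2 = ‖a i - A‖ ^ 2 + 2 * ⟪a i - A, A - c⟫ + ‖A - c‖ ^ 2 := by
    intro i
    have h := norm_add_sq_real (a i - A) (A - c)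
    rw [sub_add_sub_cancel] at h
    linarith
  have hsum : ∑ i, lam i * ⟪a i - A, A - c⟫ = 0 := by
    have : ∑ i, lam i * ⟪a i - A, A - c⟫ = ⟪∑ i, lam i • (a i - A), A - c⟫ := by
      rw [sum_inner]
      exact Finset.sum_congr rfl fun i _ => (real_inner_smul_left _ _ _).symm
    rw [this, hzero, inner_zero_left]
  calc ∑ i, lam i * ‖a i - c‖ ^ 2
      = ∑ i, (lam i * ‖a i - A‖ ^ 2 + 2 * (lam i * ⟪a i - A, A - c⟫) + lam i * ‖A - c‖ ^ 2) := by
        refine Finset.sum_congr rfl fun i _ => ?_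
        rw [key i]; ring
    _ = ∑ i, lam i * ‖a i - A‖ ^ 2 + 2 * ∑ i, lam i * ⟪a i - A, A - c⟫
          + (∑ i, lam i) * ‖A - c‖ ^ 2 := by
        rw [Finset.sum_add_distrib, Finset.sum_add_distrib, ← Finset.mul_sum, ← Finset.sum_mul]
    _ = ∑ i, lam i * ‖a i - A‖ ^ 2 + ‖A - c‖ ^ 2 := by rw [hsum, h1]; ring

/-- Double-sum variance identity. -/
lemma aux_V1 {l : ℕ} (a : Fin l → E) (lam : Fin l → ℝ) (h1 : ∑ i, lam i = 1) :
    ∑ i, ∑ j, lam i * lam j * ‖a i - a j‖ ^ 2 =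
      2 * ∑ i, lam i * ‖a i - (∑ j, lam j • a j)‖ ^ 2 := by
  set A : E := ∑ j, lam j • a j with hA
  set K : ℝ := ∑ i, lam i * ‖a i - A‖ ^ 2 with hK
  have step : ∀ i, ∑ j, lam i * lam j * ‖a i - a j‖ ^ 2 = lam i * (K + ‖A - a i‖ ^ 2) := by
    intro i
    have : ∑ j, lam j * ‖a j - a i‖ ^ 2 = K + ‖A - a i‖ ^ 2 := aux_V2 a lam h1 (a i)
    rw [← this, Finset.mul_sum]
    refine Finset.sum_congr rfl fun j _ => ?_
    rw [norm_sub_rev]; ring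
  rw [Finset.sum_congr rfl fun i _ => step i]
  have : ∑ i, lam i * (K + ‖A - a i‖ ^ 2)
      = (∑ i, lam i) * K + ∑ i, lam i * ‖A - a i‖ ^ 2 := by
    simp only [mul_add]
    rw [Finset.sum_add_distrib, ← Finset.sum_mul]
  rw [this, h1]
  have : ∑ i, lam i * ‖A - a i‖ ^ 2 = K := by
    rw [hK]
    exact Finset.sum_congr rfl fun i _ => by rw [norm_sub_rev]
  rw [this]; ring

/-- Convexity of `x ↦ ‖x + c‖ ^ 2`. -/
lemma aux_convexOn_norm_add_sq (c : E) : ConvexOn ℝ Set.univ (fun x : E => ‖x + c‖ ^ 2) := by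
  refine ⟨convex_univ, fun x _ y _ a b ha hb hab => ?_⟩
  simp only [smul_eq_mul]
  have hcomb : a • x + b • y + c = a • (x + c) + b • (y + c) := by
    rw [smul_add, smul_add, add_add_add_comm, Convex.combo_self hab]
  have h1 : ‖a • x + b • y + c‖ ≤ a * ‖x + c‖ + b * ‖y + c‖ := by
    rw [hcomb]
    refine (norm_add_le _ _).trans ?_
    rw [norm_smul, norm_smul, Real.norm_eq_abs, Real.norm_eq_abs,
      abs_of_nonneg ha, abs_of_nonneg hb]
  have h2 : (0:ℝ) ≤ ‖a • x + b • y + c‖ := norm_nonneg _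
  nlinarith [sq_nonneg (‖x + c‖ - ‖y + c‖), norm_nonneg (x + c), norm_nonneg (y + c),
    mul_nonneg ha hb, mul_nonneg ha (norm_nonneg (x + c)), mul_nonneg hb (norm_nonneg (y + c))]

end Aux

/-- Jensen equality for maps affine on segments. -/
lemma aux_affine_sum {n m : ℕ}
    (v : EuclideanSpace ℝ (Fin n) → EuclideanSpace ℝ (Fin m))
    (hvaff : ∀ x y : EuclideanSpace ℝ (Fin n), ∀ t ∈ Set.Icc (0 : ℝ) 1,
      v (t • x + (1 - t) • y) = t • v x + (1 - t) • v y)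
    {l : ℕ} (yv : Fin l → EuclideanSpace ℝ (Fin n)) (lam : Fin l → ℝ)
    (h0 : ∀ i, 0 ≤ lam i) (h1 : ∑ i, lam i = 1) :
    v (∑ i, lam i • yv i) = ∑ i, lam i • v (yv i) := by
  have key : ∀ c : EuclideanSpace ℝ (Fin m),
      ⟪c, v (∑ i, lam i • yv i)⟫ = ⟪c, ∑ i, lam i • v (yv i)⟫ := by
    intro c
    set f : EuclideanSpace ℝ (Fin n) → ℝ := fun z => ⟪c, v z⟫ with hf
    have haff : ∀ x y : EuclideanSpace ℝ (Fin n), ∀ a b : ℝ, 0 ≤ a → 0 ≤ b → a + b = 1 →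
        f (a • x + b • y) = a * f x + b * f y := by
      intro x y a b ha hb hab
      have hb' : b = 1 - a := by linarith
      subst hb'
      rw [hf]
      simp only
      rw [hvaff x y a ⟨ha, by linarith⟩, inner_add_right, real_inner_smul_right,
        real_inner_smul_right]
    have hconv : ConvexOn ℝ Set.univ f :=
      ⟨convex_univ, fun x _ y _ a b ha hb hab => by
        rw [smul_eq_mul, smul_eq_mul]; exact le_of_eq (haff x y a b ha hb hab)⟩
    have hconc : ConcaveOn ℝ Set.univ f :=
      ⟨convex_univ, fun x _ y _ a b ha hb hab => by
        rw [smul_eq_mul, smul_eq_mul]; exact ge_of_eq (haff x y a b ha hb hab)⟩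
    have hle := hconv.map_sum_le (t := Finset.univ) (w := lam) (p := yv)
      (fun i _ => h0 i) h1 (fun i _ => Set.mem_univ _)
    have hge := hconc.le_map_sum (t := Finset.univ) (w := lam) (p := yv)
      (fun i _ => h0 i) h1 (fun i _ => Set.mem_univ _)
    have heq : f (∑ i, lam i • yv i) = ∑ i, lam i • f (yv i) := le_antisymm hle hge
    rw [hf] at heq
    simp only [smul_eq_mul] at heq
    rw [heq, inner_sum]
    exact Finset.sum_congr rfl fun i _ => (real_inner_smul_right _ _ _).symm
  have h := key (v (∑ i, lam i • yv i) - ∑ i, lam i • v (yv i))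
  have h0' : ⟪v (∑ i, lam i • yv i) - ∑ i, lam i • v (yv i),
      v (∑ i, lam i • yv i) - ∑ i, lam i • v (yv i)⟫ = 0 := by
    rw [inner_sub_right, h, sub_self]
  exact sub_eq_zero.mp (inner_self_eq_zero.mp h0')

/-- A `K`-function in the sense of Minty: lower semicontinuous and convex in the
first variable, and satisfying the averaging inequality. -/
def IsKFunction (m n : ℕ)
    (Φ : EuclideanSpace ℝ (Fin m) → EuclideanSpace ℝ (Fin n) → EuclideanSpace ℝ (Fin n) → ℝ) :
    Prop :=
  (∀ y y' : EuclideanSpace ℝ (Fin n),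
      LowerSemicontinuous (fun x => Φ x y y') ∧
      ConvexOn ℝ Set.univ (fun x => Φ x y y')) ∧
  (∀ (l : ℕ) (x : Fin l → EuclideanSpace ℝ (Fin m))
      (yv : Fin l → EuclideanSpace ℝ (Fin n)) (lam : Fin l → ℝ),
    (∀ i, 0 ≤ lam i) → (∑ i, lam i = 1) →
    ∀ y : EuclideanSpace ℝ (Fin n),
      ∑ i, ∑ j, lam i * lam j * Φ (x i - x j) (yv i) (yv j) ≥
        2 * ∑ i, lam i * Φ (x i - ∑ j, lam j • x j) (yv i) y)

theorem stmt_13 (n m : ℕ)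
    (v : EuclideanSpace ℝ (Fin n) → EuclideanSpace ℝ (Fin m))
    (hvaff : ∀ x y : EuclideanSpace ℝ (Fin n), ∀ t ∈ Set.Icc (0 : ℝ) 1,
      v (t • x + (1 - t) • y) = t • v x + (1 - t) • v y)
    (hvlip : ∀ x y : EuclideanSpace ℝ (Fin n), ‖v x - v y‖ ≤ ‖x - y‖)
    (Φ : EuclideanSpace ℝ (Fin m) → EuclideanSpace ℝ (Fin n) → EuclideanSpace ℝ (Fin n) → ℝ)
    (hΦ : ∀ x y y', Φ x y y' =
      ‖x‖ ^ 2 + 2 * ⟪x, v y - v y'⟫ - ‖y - y'‖ ^ 2 + ‖v y - v y'‖ ^ 2) :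
    IsKFunction m n Φ := by
  -- Key rewriting of Φ
  have hΦ' : ∀ x y y', Φ x y y' = ‖x + (v y - v y')‖ ^ 2 - ‖y - y'‖ ^ 2 := by
    intro x y y'
    have h := norm_add_sq_real x (v y - v y')
    rw [hΦ]
    linarith
  constructor
  · intro y y'
    have hfun : (fun x => Φ x y y') =
        fun x => ‖x + (v y - v y')‖ ^ 2 - ‖y - y'‖ ^ 2 := funext fun x => hΦ' x y y'
    rw [hfun]
    constructor
    · apply Continuous.lowerSemicontinuous
      exact (((continuous_id.add continuous_const).norm).pow 2).sub continuous_const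
    · have := (aux_convexOn_norm_add_sq (v y - v y')).add (convexOn_const
        (-‖y - y'‖ ^ 2) convex_univ)
      simp only [sub_eq_add_neg] at this ⊢
      exact this
  · intro l x yv lam h0 h1 y
    set S : EuclideanSpace ℝ (Fin m) := ∑ j, lam j • x j with hS
    set u : Fin l → EuclideanSpace ℝ (Fin m) := fun i => x i + v (yv i) with hu
    set U : EuclideanSpace ℝ (Fin m) := ∑ j, lam j • u j with hU
    set Y : EuclideanSpace ℝ (Fin n) := ∑ j, lam j • yv j with hY
    set T : EuclideanSpace ℝ (Fin m) := ∑ j, lam j • v (yv j) with hT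
    -- LHS computation
    have hL : ∑ i, ∑ j, lam i * lam j * Φ (x i - x j) (yv i) (yv j) =
        2 * ∑ i, lam i * ‖u i - U‖ ^ 2 - 2 * ∑ i, lam i * ‖yv i - Y‖ ^ 2 := by
      have expand : ∀ i j, lam i * lam j * Φ (x i - x j) (yv i) (yv j) =
          lam i * lam j * ‖u i - u j‖ ^ 2 - lam i * lam j * ‖yv i - yv j‖ ^ 2 := by
        intro i j
        rw [hΦ']
        have : x i - x j + (v (yv i) - v (yv j)) = u i - u j := by
          simp only [hu]; abel
        rw [this]; ring
      calc ∑ i, ∑ j, lam i * lam j * Φ (x i - x j) (yv i) (yv j)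
          = ∑ i, ∑ j, (lam i * lam j * ‖u i - u j‖ ^ 2 - lam i * lam j * ‖yv i - yv j‖ ^ 2) := by
            exact Finset.sum_congr rfl fun i _ => Finset.sum_congr rfl fun j _ => expand i j
        _ = ∑ i, ∑ j, lam i * lam j * ‖u i - u j‖ ^ 2
              - ∑ i, ∑ j, lam i * lam j * ‖yv i - yv j‖ ^ 2 := by
            rw [← Finset.sum_sub_distrib]
            exact Finset.sum_congr rfl fun i _ => by rw [← Finset.sum_sub_distrib]
        _ = 2 * ∑ i, lam i * ‖u i - U‖ ^ 2 - 2 * ∑ i, lam i * ‖yv i - Y‖ ^ 2 := by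
            rw [aux_V1 u lam h1, aux_V1 yv lam h1]
    -- RHS computation
    have hR : 2 * ∑ i, lam i * Φ (x i - S) (yv i) y =
        2 * (∑ i, lam i * ‖u i - U‖ ^ 2 + ‖U - (S + v y)‖ ^ 2
          - (∑ i, lam i * ‖yv i - Y‖ ^ 2 + ‖Y - y‖ ^ 2)) := by
      congr 1
      calc ∑ i, lam i * Φ (x i - S) (yv i) y
          = ∑ i, (lam i * ‖u i - (S + v y)‖ ^ 2 - lam i * ‖yv i - y‖ ^ 2) := by
            refine Finset.sum_congr rfl fun i _ => ?_
            rw [hΦ']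
            have : x i - S + (v (yv i) - v y) = u i - (S + v y) := by
              simp only [hu]; abel
            rw [this]; ring
        _ = ∑ i, lam i * ‖u i - (S + v y)‖ ^ 2 - ∑ i, lam i * ‖yv i - y‖ ^ 2 := by
            rw [← Finset.sum_sub_distrib]
        _ = ∑ i, lam i * ‖u i - U‖ ^ 2 + ‖U - (S + v y)‖ ^ 2
              - (∑ i, lam i * ‖yv i - Y‖ ^ 2 + ‖Y - y‖ ^ 2) := by
            rw [aux_V2 u lam h1 (S + v y), aux_V2 yv lam h1 y]
    -- The difference term
    have hUS : U - (S + v y) = v Y - v y := by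
      have hUsum : U = S + T := by
        simp only [hU, hS, hT, hu, smul_add, Finset.sum_add_distrib]
      have hTY : T = v Y := by
        rw [hT, hY, aux_affine_sum v hvaff yv lam h0 h1]
      rw [hUsum, hTY]
      abel
    have hlipsq : ‖v Y - v y‖ ^ 2 ≤ ‖Y - y‖ ^ 2 :=
      pow_le_pow_left₀ (norm_nonneg _) (hvlip Y y) 2
    rw [ge_iff_le, hL, hR, hUS]
    nlinarith [hlipsq]
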